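/- For the 4-point neighborhood: if S ⊆ ℤ² is such that every x ∈ S has at most 3 orthogonal neighbors in S, then the upper density of S is at most 4/5; moreover the set {x ∈ ℤ² : x₁ + 2x₂ ≢ 0 (mod 5)} has every element with exactly 3 orthogonal neighbors in it and has density exactly 4/5. (Hence δ₄(3) = 4/5.) -/

import Mathlib

open Filter Topology

/-- `y` is an orthogonal (von Neumann) neighbor of `x` in `ℤ²`. -/
def IsOrthNbr (x y : ℤ × ℤ) : Prop :=
  y - x ∈ ({(1, 0), (-1, 0), (0, 1), (0, -1)} : Set (ℤ × ℤ))

/-- The number of orthogonal neighbors of `x` lying in `S`. -/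
noncomputable def orthNbrCount (S : Set (ℤ × ℤ)) (x : ℤ × ℤ) : ℕ :=
  Set.ncard {y ∈ S | IsOrthNbr x y}

/-- The box `B_r = {x : |x₁| < r, |x₂| < r}`. -/
def box (r : ℕ) : Set (ℤ × ℤ) :=
  {x | |x.1| < (r : ℤ) ∧ |x.2| < (r : ℤ)}

/-- The upper density of `S ⊆ ℤ²`: `limsup_{r → ∞} |S ∩ B_r| / (2r-1)²`. -/
noncomputable def upperDensity (S : Set (ℤ × ℤ)) : ℝ :=
  limsup (fun r : ℕ => (Set.ncard (S ∩ _root_.box r) : ℝ) / (2 * (r : ℝ) - 1) ^ 2) atTop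

/-- `S` has density `d`: the sequence `|S ∩ B_r| / (2r-1)²` tends to `d`. -/
def HasDensity (S : Set (ℤ × ℤ)) (d : ℝ) : Prop :=
  Tendsto (fun r : ℕ => (Set.ncard (S ∩ _root_.box r) : ℝ) / (2 * (r : ℝ) - 1) ^ 2) atTop (𝓝 d)

namespace Delta4Aux

open Finset

/-! ### Row counting -/

lemma row_count (lo hi c : ℤ) :
    ((Finset.Icc lo hi).filter (fun a => (a - c) % 5 = 0)) =
      (Finset.Icc (-((c - lo)/5)) ((hi - c)/5)).image (fun k => c + 5*k) := by
  ext a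
  simp only [mem_filter, mem_image, mem_Icc]
  constructor
  · rintro ⟨⟨h1, h2⟩, h3⟩
    exact ⟨(a - c)/5, by omega, by omega⟩
  · rintro ⟨k, ⟨hk1, hk2⟩, rfl⟩
    refine ⟨⟨by omega, by omega⟩, by omega⟩

lemma row_count_bounds (lo hi c : ℤ) (hlen : lo ≤ hi + 1) :
    5 * (((Finset.Icc lo hi).filter (fun a => (a - c) % 5 = 0)).card : ℤ) ≤ hi - lo + 1 + 4 ∧
    hi - lo + 1 ≤ 5 * (((Finset.Icc lo hi).filter (fun a => (a - c) % 5 = 0)).card : ℤ) + 4 := by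
  rw [row_count, Finset.card_image_of_injective _ (fun x y h => by omega), Int.card_Icc]
  constructor <;>
  · rcases le_or_gt lo (hi+1) with h | h
    · rw [Int.toNat_of_nonneg (by omega)]; omega
    · rw [Int.toNat_of_nonpos (by omega)]; omega

/-! ### Neighbor combinatorics -/

def D4 : Finset (ℤ × ℤ) := {(1,0), (-1,0), (0,1), (0,-1)}

lemma nbr_iff (x y : ℤ × ℤ) : IsOrthNbr x y ↔ ∃ d ∈ D4, x + d = y := by
  constructor
  · intro h
    exact ⟨y - x, by simpa [D4, IsOrthNbr] using h, by ring⟩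
  · rintro ⟨d, hd, rfl⟩
    show x + d - x ∈ _
    simp only [add_sub_cancel_left]
    fin_cases hd <;> simp

lemma nbrSet_eq (S : Set (ℤ × ℤ)) [DecidablePred (· ∈ S)] (x : ℤ × ℤ) :
    {y ∈ S | IsOrthNbr x y} = ↑((D4.filter (fun d => x + d ∈ S)).image (x + ·)) := by
  ext y
  simp only [Set.mem_setOf_eq, coe_image, Set.mem_image, mem_coe, mem_filter, nbr_iff]
  constructor
  · rintro ⟨hyS, d, hd, rfl⟩
    exact ⟨d, ⟨hd, hyS⟩, rfl⟩
  · rintro ⟨d, ⟨hd, hdS⟩, rfl⟩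
    exact ⟨hdS, d, hd, rfl⟩

lemma orthNbrCount_eq (S : Set (ℤ × ℤ)) [DecidablePred (· ∈ S)] (x : ℤ × ℤ) :
    orthNbrCount S x = (D4.filter (fun d => x + d ∈ S)).card := by
  rw [orthNbrCount, nbrSet_eq, Set.ncard_coe_finset,
    Finset.card_image_of_injective _ (add_right_injective x)]

lemma exists_missing (S : Set (ℤ × ℤ)) (x : ℤ × ℤ) (h : orthNbrCount S x ≤ 3) :
    ∃ d ∈ D4, x + d ∉ S := by
  classical
  by_contra hall
  push_neg at hall
  rw [orthNbrCount_eq] at h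
  rw [Finset.filter_true_of_mem hall] at h
  simp [D4] at h

/-! ### Boxes as finsets -/

noncomputable def boxF (r : ℕ) : Finset (ℤ × ℤ) :=
  Finset.Icc (1 - (r:ℤ)) ((r:ℤ) - 1) ×ˢ Finset.Icc (1 - (r:ℤ)) ((r:ℤ) - 1)

lemma box_coe (r : ℕ) : _root_.box r = ↑(boxF r) := by
  ext x
  simp only [_root_.box, Set.mem_setOf_eq, boxF, coe_product, Set.mem_prod, mem_coe, mem_Icc,
    abs_lt]
  omega

lemma boxF_card (r : ℕ) (hr : 1 ≤ r) : (boxF r).card = (2 * r - 1) ^ 2 := by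
  rw [boxF, Finset.card_product, Int.card_Icc]
  have : ((r:ℤ) - 1 + 1 - (1 - (r:ℤ))).toNat = 2 * r - 1 := by omega
  rw [this]; ring

lemma inter_ncard (S : Set (ℤ × ℤ)) [DecidablePred (· ∈ S)] (r : ℕ) :
    (S ∩ _root_.box r).ncard = ((boxF r).filter (· ∈ S)).card := by
  rw [box_coe]
  rw [show S ∩ ↑(boxF r) = ↑((boxF r).filter (· ∈ S)) by
    ext x; simp [Set.mem_inter_iff, and_comm]]
  exact Set.ncard_coe_finset _

/-! ### Part 1: the upper bound -/

lemma card_bound (S : Set (ℤ × ℤ)) [DecidablePred (· ∈ S)]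
    (hS : ∀ x ∈ S, orthNbrCount S x ≤ 3) (r : ℕ) :
    5 * ((boxF r).filter (· ∈ S)).card ≤ 4 * (2 * r + 1) ^ 2 := by
  classical
  set A := (boxF r).filter (· ∈ S) with hA
  set f : ℤ × ℤ → ℤ × ℤ := fun x =>
    if h : ∃ y, (∃ d ∈ D4, y = x + d) ∧ y ∉ S then h.choose else x
  have hf : ∀ x ∈ A, (∃ d ∈ D4, f x = x + d) ∧ f x ∉ S := by
    intro x hx
    have hxS : x ∈ S := (mem_filter.mp hx).2
    obtain ⟨d, hd, hds⟩ := exists_missing S x (hS x hxS)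
    have h : ∃ y, (∃ d ∈ D4, y = x + d) ∧ y ∉ S := ⟨x + d, ⟨d, hd, rfl⟩, hds⟩
    have hfx : f x = h.choose := by simp only [f]; rw [dif_pos h]
    have hc := h.choose_spec
    rw [hfx]
    obtain ⟨⟨d', hd', hy⟩, hyS⟩ := hc
    exact ⟨⟨d', hd', hy⟩, hyS⟩
  -- fibers of f have size at most 4
  have hfib : A.card ≤ 4 * (A.image f).card := by
    refine Finset.card_le_mul_card_image A 4 ?_
    intro y hy
    calc (A.filter (fun x => f x = y)).card
        ≤ (D4.image (fun d => y - d)).card := by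
          apply Finset.card_le_card
          intro x hx
          obtain ⟨hxA, hfx⟩ := mem_filter.mp hx
          obtain ⟨⟨d, hd, hxd⟩, -⟩ := hf x hxA
          simp only [mem_image]
          exact ⟨d, hd, by rw [← hfx, hxd]; ring⟩
      _ ≤ D4.card := Finset.card_image_le
      _ = 4 := by decide
  -- image lands in the complement inside the bigger box
  have himg : A.image f ⊆ (boxF (r+1)).filter (· ∉ S) := by
    intro y hy
    obtain ⟨x, hxA, rfl⟩ := Finset.mem_image.mp hy
    obtain ⟨⟨d, hd, hxd⟩, hns⟩ := hf x hxA
    have hxb : x ∈ boxF r := (mem_filter.mp hxA).1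
    refine mem_filter.mpr ⟨?_, hns⟩
    rw [hxd]
    simp only [boxF, mem_product, mem_Icc] at hxb ⊢
    fin_cases hd <;> first | omega | (simp; omega) | simp
  have hsub : A ⊆ (boxF (r+1)).filter (· ∈ S) := by
    intro x hx
    obtain ⟨hxb, hxS⟩ := mem_filter.mp hx
    refine mem_filter.mpr ⟨?_, hxS⟩
    simp only [boxF, mem_product, mem_Icc] at hxb ⊢
    push_cast
    omega
  have hpart : ((boxF (r+1)).filter (· ∈ S)).card + ((boxF (r+1)).filter (· ∉ S)).card
      = (boxF (r+1)).card := Finset.card_filter_add_card_filter_not _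
  have h1 : A.card ≤ ((boxF (r+1)).filter (· ∈ S)).card := Finset.card_le_card hsub
  have h2 : (A.image f).card ≤ ((boxF (r+1)).filter (· ∉ S)).card := Finset.card_le_card himg
  have h3 : (boxF (r+1)).card = (2 * r + 1)^2 := by
    rw [boxF_card (r+1) (by omega), show 2*(r+1)-1 = 2*r+1 from by omega]
  omega

lemma part1 (S : Set (ℤ × ℤ)) (hS : ∀ x ∈ S, orthNbrCount S x ≤ 3) :
    upperDensity S ≤ 4 / 5 := by
  classical
  set a : ℕ → ℝ := fun r => (Set.ncard (S ∩ _root_.box r) : ℝ) / (2 * (r : ℝ) - 1) ^ 2 with ha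
  set c : ℕ → ℝ := fun r => 4/5 + 8 / r with hc
  have hab : ∀ r : ℕ, 1 ≤ r → a r ≤ c r := by
    intro r hr
    have hcard : 5 * (S ∩ _root_.box r).ncard ≤ 4 * (2 * r + 1) ^ 2 := by
      rw [inter_ncard]; exact card_bound S hS r
    have hL : (0:ℝ) < 2 * (r:ℝ) - 1 := by
      have : (1:ℝ) ≤ (r:ℝ) := by exact_mod_cast hr
      linarith
    have hr' : (0:ℝ) < (r:ℝ) := by positivity
    rw [ha, hc]
    simp only []
    rw [div_add_div _ _ (by norm_num : (5:ℝ) ≠ 0) (ne_of_gt hr'), div_le_div_iff₀ (by positivity) (by positivity)]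
    have hcast : (5:ℝ) * (Set.ncard (S ∩ _root_.box r) : ℝ) ≤ 4 * (2 * (r:ℝ) + 1) ^ 2 := by
      exact_mod_cast hcard
    have hr1 : (1:ℝ) ≤ (r:ℝ) := by exact_mod_cast hr
    have hm := mul_le_mul_of_nonneg_left hcast (le_of_lt hr')
    nlinarith [sq_nonneg ((r:ℝ) - 1), hm, hr1]
  have hctend : Tendsto c atTop (𝓝 (4/5)) := by
    have : Tendsto (fun r : ℕ => 8 / (r:ℝ)) atTop (𝓝 0) := by
      simpa using Tendsto.const_div_atTop (tendsto_natCast_atTop_atTop (R := ℝ)) 8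
    simpa using tendsto_const_nhds.add this
  have : upperDensity S ≤ limsup c atTop := by
    apply Filter.limsup_le_limsup
    · filter_upwards [eventually_ge_atTop 1] with r hr using hab r hr
    · refine Filter.IsBoundedUnder.isCoboundedUnder_le (isBoundedUnder_of ⟨0, fun r => ?_⟩)
      positivity
    · exact hctend.isBoundedUnder_le
  rwa [hctend.limsup_eq] at this

/-! ### Part 2: the example set -/

abbrev Sex : Set (ℤ × ℤ) := {x : ℤ × ℤ | ¬ x.1 + 2 * x.2 ≡ 0 [ZMOD 5]}

lemma part2 (x : ℤ × ℤ) (hx : x ∈ Sex) : orthNbrCount Sex x = 3 := by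
  classical
  rw [orthNbrCount_eq]
  set c := x.1 + 2 * x.2 with hcdef
  have hc : c % 5 ≠ 0 := by
    intro h
    exact hx (show c % 5 = 0 % 5 by omega)
  have k : ∀ d : ℤ × ℤ, ((x + d) ∈ Sex) ↔ ¬ ((c + (d.1 + 2 * d.2)) % 5 = 0) := by
    intro d
    show ¬ ((x + d).1 + 2 * (x + d).2 ≡ 0 [ZMOD 5]) ↔ _
    have : (x + d).1 + 2 * (x + d).2 = c + (d.1 + 2 * d.2) := by
      simp [hcdef, Prod.fst_add, Prod.snd_add]; ring
    rw [this]
    unfold Int.ModEq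
    omega
  rw [Finset.filter_congr (fun d _ => by rw [k d])]
  simp only [D4, Finset.filter_insert, Finset.filter_singleton]
  norm_num
  split_ifs <;> first | omega | decide | (simp_all; omega)

/-! ### Part 3: the density computation -/

lemma filter_not_congr (r : ℕ) [DecidablePred (· ∈ Sex)] :
    (boxF r).filter (· ∈ Sex) = (boxF r).filter (fun z => ¬ ((z.1 + 2 * z.2) % 5 = 0)) := by
  classical
  refine Finset.filter_congr fun z _ => ?_
  show (¬ z.1 + 2 * z.2 ≡ 0 [ZMOD 5]) ↔ _
  unfold Int.ModEq
  omega

lemma tcard_fiber (r : ℕ) (b : ℤ) (hb : 1 - (r:ℤ) ≤ b ∧ b ≤ (r:ℤ) - 1) :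
    (((boxF r).filter (fun z => (z.1 + 2 * z.2) % 5 = 0)).filter (fun z => z.2 = b)) =
    ((Finset.Icc (1 - (r:ℤ)) ((r:ℤ) - 1)).filter
        (fun a => (a - (-2 * b)) % 5 = 0)).image (fun a => (a, b)) := by
  ext ⟨u, v⟩
  simp only [Finset.mem_filter, Finset.mem_image, boxF, Finset.mem_product, Finset.mem_Icc,
    Prod.mk.injEq]
  constructor
  · rintro ⟨⟨⟨hu, hv⟩, hm⟩, rfl⟩
    exact ⟨u, ⟨hu, by omega⟩, rfl, rfl⟩
  · rintro ⟨a, ⟨ha, hm⟩, rfl, rfl⟩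
    exact ⟨⟨⟨ha, hb⟩, by omega⟩, rfl⟩

lemma tcard_bounds (r : ℕ) (hr : 1 ≤ r) :
    (2*(r:ℤ)-1) * ((2*(r:ℤ)-1) - 4) ≤
      5 * (((boxF r).filter (fun z => (z.1 + 2 * z.2) % 5 = 0)).card : ℤ) ∧
    5 * (((boxF r).filter (fun z => (z.1 + 2 * z.2) % 5 = 0)).card : ℤ) ≤
      (2*(r:ℤ)-1) * ((2*(r:ℤ)-1) + 4) := by
  classical
  set I := Finset.Icc (1 - (r:ℤ)) ((r:ℤ) - 1) with hI
  set T := (boxF r).filter (fun z => (z.1 + 2 * z.2) % 5 = 0) with hT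
  have hfib : T.card = ∑ b ∈ I, (T.filter (fun z => z.2 = b)).card := by
    refine Finset.card_eq_sum_card_fiberwise (f := Prod.snd) fun z hz => ?_
    have := (Finset.mem_filter.mp hz).1
    simp only [boxF, Finset.mem_product] at this
    exact this.2
  have hrow : ∀ b ∈ I, (T.filter (fun z => z.2 = b)).card =
      (I.filter (fun a => (a - (-2 * b)) % 5 = 0)).card := by
    intro b hb
    rw [hI, mem_Icc] at hb
    rw [hT, tcard_fiber r b hb,
      Finset.card_image_of_injective _ (fun u v h => by simpa using congrArg Prod.fst h)]
  have hlen : (1 - (r:ℤ)) ≤ ((r:ℤ) - 1) + 1 := by push_cast; omega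
  have hcard : ∀ b ∈ I,
      5 * ((I.filter (fun a => (a - (-2 * b)) % 5 = 0)).card : ℤ) ≤ (2*(r:ℤ)-1) + 4 ∧
      (2*(r:ℤ)-1) - 4 ≤ 5 * ((I.filter (fun a => (a - (-2 * b)) % 5 = 0)).card : ℤ) := by
    intro b _
    have := row_count_bounds (1 - (r:ℤ)) ((r:ℤ) - 1) (-2 * b) hlen
    constructor
    · have h := this.1; rw [hI]; omega
    · have h := this.2; rw [hI]; omega
  have hIcard : (I.card : ℤ) = 2*(r:ℤ)-1 := by
    rw [hI, Int.card_Icc]; omega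
  have e : 5 * (T.card : ℤ) = ∑ b ∈ I, 5 * ((I.filter (fun a => (a - (-2 * b)) % 5 = 0)).card : ℤ) := by
    rw [hfib]
    push_cast
    rw [Finset.mul_sum]
    exact Finset.sum_congr rfl fun b hb => by rw [hrow b hb]
  constructor
  · rw [e]
    calc (2*(r:ℤ)-1) * ((2*(r:ℤ)-1) - 4) = I.card • ((2*(r:ℤ)-1) - 4) := by
          rw [nsmul_eq_mul, hIcard]
      _ ≤ _ := Finset.card_nsmul_le_sum I _ _ fun b hb => (hcard b hb).2
  · rw [e]
    calc _ ≤ I.card • ((2*(r:ℤ)-1) + 4) :=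
          Finset.sum_le_card_nsmul I _ _ fun b hb => (hcard b hb).1
      _ = (2*(r:ℤ)-1) * ((2*(r:ℤ)-1) + 4) := by rw [nsmul_eq_mul, hIcard]

lemma part3_bound (r : ℕ) (hr : 1 ≤ r) :
    |(Set.ncard (Sex ∩ _root_.box r) : ℝ) / (2 * (r : ℝ) - 1) ^ 2 - 4/5| ≤ 1 / (r:ℝ) := by
  classical
  have hsplit : ((boxF r).filter (· ∈ Sex)).card +
      ((boxF r).filter (fun z => (z.1 + 2 * z.2) % 5 = 0)).card = (boxF r).card := by
    rw [filter_not_congr]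
    have := Finset.card_filter_add_card_filter_not
      (s := boxF r) (p := fun z : ℤ × ℤ => (z.1 + 2 * z.2) % 5 = 0)
    omega
  have hbox : (boxF r).card = (2 * r - 1) ^ 2 := boxF_card r hr
  have hn : Set.ncard (Sex ∩ _root_.box r) = ((boxF r).filter (· ∈ Sex)).card := inter_ncard _ r
  obtain ⟨ht1, ht2⟩ := tcard_bounds r hr
  set T : ℤ := (((boxF r).filter (fun z => (z.1 + 2 * z.2) % 5 = 0)).card : ℤ) with hTdef
  have hnz : (Set.ncard (Sex ∩ _root_.box r) : ℤ) = (2*(r:ℤ)-1)^2 - T := by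
    have h1 : Set.ncard (Sex ∩ _root_.box r) +
        ((boxF r).filter (fun z => (z.1 + 2 * z.2) % 5 = 0)).card = (2 * r - 1) ^ 2 := by
      rw [hn]; omega
    have h2 := congrArg (Nat.cast : ℕ → ℤ) h1
    push_cast at h2
    rw [show ((2 * r - 1 : ℕ) : ℤ) = 2*(r:ℤ)-1 from by omega] at h2
    rw [hTdef]
    linarith
  have hL : (0:ℝ) < 2 * (r:ℝ) - 1 := by
    have : (1:ℝ) ≤ (r:ℝ) := by exact_mod_cast hr
    linarith
  have hr' : (0:ℝ) < (r:ℝ) := by positivity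
  have hnzR : (Set.ncard (Sex ∩ _root_.box r) : ℝ) = (2*(r:ℝ)-1)^2 - (T:ℝ) := by
    exact_mod_cast hnz
  have ht1R : (2*(r:ℝ)-1) * ((2*(r:ℝ)-1) - 4) ≤ 5 * (T:ℝ) := by exact_mod_cast ht1
  have ht2R : 5 * (T:ℝ) ≤ (2*(r:ℝ)-1) * ((2*(r:ℝ)-1) + 4) := by exact_mod_cast ht2
  have hr1 : (1:ℝ) ≤ (r:ℝ) := by exact_mod_cast hr
  have e1 : ((2*(r:ℝ)-1)^2 - (T:ℝ)) / (2*(r:ℝ)-1)^2 - 4/5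
      = ((2*(r:ℝ)-1)^2 - 5*(T:ℝ)) / (5 * (2*(r:ℝ)-1)^2) := by
    field_simp
    ring
  rw [hnzR, e1, _root_.abs_le]
  constructor
  · rw [show -(1/(r:ℝ)) = (-1)/(r:ℝ) from by ring,
      div_le_div_iff₀ hr' (by positivity)]
    nlinarith [mul_le_mul_of_nonneg_right ht2R hr'.le, hr1, hL]
  · rw [div_le_div_iff₀ (by positivity) hr']
    nlinarith [mul_le_mul_of_nonneg_right ht1R hr'.le, hr1, hL]

lemma part3 : HasDensity Sex (4/5) := by
  rw [HasDensity]
  have h0 : Tendsto (fun r : ℕ => (1:ℝ)/r) atTop (𝓝 0) := tendsto_one_div_atTop_nhds_zero_nat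
  have h1 : Tendsto
      (fun r : ℕ => (Set.ncard (Sex ∩ _root_.box r) : ℝ)/(2*(r:ℝ)-1)^2 - 4/5) atTop (𝓝 0) := by
    apply squeeze_zero_norm' ?_ h0
    filter_upwards [eventually_ge_atTop 1] with r hr
    simpa [Real.norm_eq_abs] using part3_bound r hr
  have h2 := h1.add (tendsto_const_nhds (x := (4/5:ℝ)))
  simpa using h2

end Delta4Aux

theorem delta4_three :
    (∀ S : Set (ℤ × ℤ), (∀ x ∈ S, orthNbrCount S x ≤ 3) → upperDensity S ≤ 4 / 5) ∧
    (∀ x ∈ {x : ℤ × ℤ | ¬ x.1 + 2 * x.2 ≡ 0 [ZMOD 5]},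
      orthNbrCount {x : ℤ × ℤ | ¬ x.1 + 2 * x.2 ≡ 0 [ZMOD 5]} x = 3) ∧
    HasDensity {x : ℤ × ℤ | ¬ x.1 + 2 * x.2 ≡ 0 [ZMOD 5]} (4 / 5) :=
  ⟨Delta4Aux.part1, fun x hx => Delta4Aux.part2 x hx, Delta4Aux.part3⟩
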